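/- arXiv:2503.07447 — 4 statements merged into one kernel-verified Lean document; each statement's English description precedes it below -/
import Mathlib

section
/- For real numbers x, y with 0 < x < 1 and 0 < y < 1, the Kullback-Leibler divergence D(x‖y) = x·log(x/y) + (1−x)·log((1−x)/(1−y)) satisfies D(x‖y) ≥ 3(x−y)²/(2x+4y). -/
theorem kl_div_lower_bound (x y : ℝ) (hx0 : 0 < x) (hx1 : x < 1)
    (hy0 : 0 < y) (hy1 : y < 1) :
    x * Real.log (x / y) + (1 - x) * Real.log ((1 - x) / (1 - y)) ≥
      3 * (x - y) ^ 2 / (2 * x + 4 * y) := by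
  rw [ge_iff_le, Real.log_div hx0.ne' hy0.ne',
    Real.log_div (by linarith : (1:ℝ) - x ≠ 0) (by linarith : (1:ℝ) - y ≠ 0)]
  set f : ℝ → ℝ := fun t => x * (Real.log x - Real.log t) +
      (1 - x) * (Real.log (1 - x) - Real.log (1 - t)) - 3 * (x - t) ^ 2 / (2 * x + 4 * t)
    with hf
  have hfx : f x = 0 := by simp [hf]
  have hd : ∀ t ∈ Set.Ioo (0:ℝ) 1, HasDerivAt f
      ((t - x) * (1 / (t * (1 - t)) - 6 * (4 * x + 2 * t) / (2 * x + 4 * t) ^ 2)) t := by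
    intro t ht
    obtain ⟨ht0, ht1⟩ := ht
    have hden : (0:ℝ) < 2 * x + 4 * t := by linarith
    have h1 : HasDerivAt (fun t : ℝ => Real.log t) t⁻¹ t := Real.hasDerivAt_log ht0.ne'
    have h2 : HasDerivAt (fun t : ℝ => Real.log (1 - t)) (-(1 - t)⁻¹) t := by
      have h := (Real.hasDerivAt_log (show (1:ℝ) - t ≠ 0 by linarith)).comp t
        ((hasDerivAt_id t).const_sub 1)
      simpa [Function.comp_def] using h
    have h3 : HasDerivAt (fun t : ℝ => 3 * (x - t) ^ 2) (6 * (t - x)) t := by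
      have h := ((((hasDerivAt_id t).const_sub x).pow 2).const_mul 3)
      refine h.congr_deriv ?_
      simp only [id_eq]
      ring
    have h4 : HasDerivAt (fun t : ℝ => 2 * x + 4 * t) 4 t := by
      simpa using ((hasDerivAt_id t).const_mul 4).const_add (2 * x)
    have h5 := h3.div h4 hden.ne'
    have hA := (h1.const_sub (Real.log x)).const_mul x
    have hB := (h2.const_sub (Real.log (1 - x))).const_mul (1 - x)
    have h := (hA.add hB).sub h5
    have htn : t ≠ 0 := ht0.ne'
    have h1t : (1:ℝ) - t ≠ 0 := by linarith
    have h1t' : t * (1 - t) ≠ 0 := mul_ne_zero htn h1t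
    refine h.congr_deriv ?_
    field_simp
    ring
  -- key sign fact
  have hkey : ∀ t ∈ Set.Ioo (0:ℝ) 1,
      6 * (4 * x + 2 * t) / (2 * x + 4 * t) ^ 2 ≤ 1 / (t * (1 - t)) := by
    intro t ht
    obtain ⟨ht0, ht1⟩ := ht
    rw [div_le_div_iff₀ (by positivity) (mul_pos ht0 (by linarith))]
    nlinarith [sq_nonneg (x - t), mul_pos ht0 ht0, sq_nonneg t, mul_pos hx0 (mul_pos ht0 ht0)]
  have hsub : ∀ a b : ℝ, 0 < a → b < 1 → a ≤ b → Set.Icc a b ⊆ Set.Ioo (0:ℝ) 1 := by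
    intro a b ha hb hab z hz
    exact ⟨lt_of_lt_of_le ha hz.1, lt_of_le_of_lt hz.2 hb⟩
  have main : 0 ≤ f y := by
    rcases le_total y x with hle | hle
    · -- f antitone on Icc y x
      have hsub' := hsub y x hy0 hx1 hle
      have hanti : AntitoneOn f (Set.Icc y x) := by
        apply antitoneOn_of_deriv_nonpos (convex_Icc y x)
        · intro z hz
          exact ((hd z (hsub' hz)).differentiableAt).continuousAt.continuousWithinAt
        · intro z hz
          rw [interior_Icc] at hz
          exact ((hd z (hsub' (Set.mem_Icc_of_Ioo hz))).differentiableAt).differentiableWithinAt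
        · intro z hz
          rw [interior_Icc] at hz
          have hz' := hsub' (Set.mem_Icc_of_Ioo hz)
          rw [(hd z hz').deriv]
          have h1 := hkey z hz'
          have h2 : z - x ≤ 0 := by linarith [hz.2]
          nlinarith
      have := hanti (Set.left_mem_Icc.2 hle) (Set.right_mem_Icc.2 hle) hle
      rw [hfx] at this
      exact this
    · -- f monotone on Icc x y
      have hsub' := hsub x y hx0 hy1 hle
      have hmono : MonotoneOn f (Set.Icc x y) := by
        apply monotoneOn_of_deriv_nonneg (convex_Icc x y)
        · intro z hz
          exact ((hd z (hsub' hz)).differentiableAt).continuousAt.continuousWithinAt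
        · intro z hz
          rw [interior_Icc] at hz
          exact ((hd z (hsub' (Set.mem_Icc_of_Ioo hz))).differentiableAt).differentiableWithinAt
        · intro z hz
          rw [interior_Icc] at hz
          have hz' := hsub' (Set.mem_Icc_of_Ioo hz)
          rw [(hd z hz').deriv]
          have h1 := hkey z hz'
          have h2 : 0 ≤ z - x := by linarith [hz.1]
          nlinarith
      have := hmono (Set.left_mem_Icc.2 hle) (Set.right_mem_Icc.2 hle) hle
      rw [hfx] at this
      exact this
  have : f y = x * (Real.log x - Real.log y) +
      (1 - x) * (Real.log (1 - x) - Real.log (1 - y)) - 3 * (x - y) ^ 2 / (2 * x + 4 * y) := rfl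
  linarith [main, this.symm ▸ main]
end

section
/- Let X ~ Bin(n, p) and t ≥ e·p·n. Then P(X > t) ≤ 2·(e·p·n/t)^t. -/
/-- Single term bound: `C(n,k) p^k (1-p)^{n-k} ≤ (e p n / k)^k` for `k ≥ 1`. -/
lemma binom_term_le_pow (n k : ℕ) (p : ℝ) (hp0 : 0 ≤ p) (hp1 : p ≤ 1) (hk : 1 ≤ k) :
    (n.choose k : ℝ) * p ^ k * (1 - p) ^ (n - k) ≤ (Real.exp 1 * p * n / k) ^ k := by
  have hk0 : (0:ℝ) < (k:ℝ) := by exact_mod_cast hk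
  have h1 : (n.choose k : ℝ) ≤ (n:ℝ) ^ k / (k.factorial : ℝ) := by
    exact_mod_cast Nat.choose_le_pow_div k n (α := ℝ)
  have hfac : (0:ℝ) < (k.factorial : ℝ) := by exact_mod_cast k.factorial_pos
  have h2 : (k:ℝ) ^ k / (k.factorial : ℝ) ≤ Real.exp k :=
    Real.pow_div_factorial_le_exp (k:ℝ) hk0.le k
  have hstep1 : (n.choose k : ℝ) * p ^ k * (1 - p) ^ (n - k)
      ≤ (p * n) ^ k / (k.factorial : ℝ) := by
    have h3 : (1 - p) ^ (n - k) ≤ 1 :=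
      pow_le_one₀ (by linarith) (by linarith)
    have h4 : (n.choose k : ℝ) * p ^ k * (1 - p) ^ (n - k) ≤ (n.choose k : ℝ) * p ^ k := by
      have := mul_le_of_le_one_right (by positivity : (0:ℝ) ≤ (n.choose k : ℝ) * p ^ k) h3
      linarith
    calc (n.choose k : ℝ) * p ^ k * (1 - p) ^ (n - k)
        ≤ (n.choose k : ℝ) * p ^ k := h4
      _ ≤ ((n:ℝ) ^ k / (k.factorial : ℝ)) * p ^ k := by
          apply mul_le_mul_of_nonneg_right h1 (by positivity)
      _ = (p * n) ^ k / (k.factorial : ℝ) := by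
          rw [mul_pow]; ring
  have hrhs : (Real.exp 1 * p * n / k) ^ k = Real.exp k * (p * n) ^ k / (k:ℝ) ^ k := by
    rw [div_pow, mul_pow, mul_pow, ← Real.exp_one_pow]; ring
  rw [hrhs]
  have h5 : (1:ℝ) / (k.factorial : ℝ) ≤ Real.exp k / (k:ℝ) ^ k := by
    rw [div_le_div_iff₀ hfac (by positivity)]
    rw [div_le_iff₀ hfac] at h2
    nlinarith [h2]
  calc (n.choose k : ℝ) * p ^ k * (1 - p) ^ (n - k)
      ≤ (p * n) ^ k / (k.factorial : ℝ) := hstep1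
    _ = (p * n) ^ k * (1 / (k.factorial : ℝ)) := by ring
    _ ≤ (p * n) ^ k * (Real.exp k / (k:ℝ) ^ k) :=
        mul_le_mul_of_nonneg_left h5 (by positivity)
    _ = Real.exp k * (p * n) ^ k / (k:ℝ) ^ k := by ring

/-- Halving step: for `1 ≤ j` and `0 ≤ μ ≤ j`, `(μ/(j+1))^(j+1) ≤ (1/2) * (μ/j)^j`. -/
lemma halving_step (μ : ℝ) (hμ : 0 ≤ μ) (j : ℕ) (hj : 1 ≤ j) (hμj : μ ≤ j) :
    (μ / (j + 1 : ℕ)) ^ (j + 1) ≤ (1/2) * (μ / j) ^ j := by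
  have hj0 : (0:ℝ) < (j:ℝ) := by exact_mod_cast hj
  have hj1 : (0:ℝ) < ((j:ℝ) + 1) := by linarith
  have hcast : ((j + 1 : ℕ) : ℝ) = (j:ℝ) + 1 := by push_cast; ring
  rw [hcast]
  have hbase : μ / ((j:ℝ) + 1) ≤ 1 := by
    rw [div_le_one hj1]; linarith
  have hfrac : ((j:ℝ) / ((j:ℝ) + 1)) ^ j ≤ 1/2 := by
    have h2 : (2:ℝ) ≤ (1 + 1/(j:ℝ)) ^ j := by
      have ha : (-2:ℝ) ≤ 1/(j:ℝ) := le_trans (by norm_num) (by positivity : (0:ℝ) ≤ 1/(j:ℝ))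
      have hj' : (j:ℝ) * (1/(j:ℝ)) = 1 := by field_simp
      calc (2:ℝ) = 1 + (j:ℝ) * (1/(j:ℝ)) := by rw [hj']; norm_num
        _ ≤ (1 + 1/(j:ℝ)) ^ j := one_add_mul_le_pow ha j
    have heq : (1 + 1/(j:ℝ)) = ((j:ℝ) + 1) / (j:ℝ) := by field_simp
    have hpos : (0:ℝ) < ((j:ℝ) / ((j:ℝ) + 1)) ^ j := by positivity
    have hinv : ((j:ℝ) / ((j:ℝ) + 1)) ^ j = ((((j:ℝ) + 1) / (j:ℝ)) ^ j)⁻¹ := by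
      rw [← inv_pow, inv_div]
    rw [hinv]
    rw [heq] at h2
    rw [inv_le_comm₀ (by positivity) (by norm_num)]
    calc (1/2 : ℝ)⁻¹ = 2 := by norm_num
      _ ≤ (((j:ℝ) + 1) / (j:ℝ)) ^ j := h2
  have key : (μ / ((j:ℝ) + 1)) ^ j = (μ / (j:ℝ)) ^ j * ((j:ℝ) / ((j:ℝ) + 1)) ^ j := by
    rw [← mul_pow]
    congr 1
    field_simp
  calc (μ / ((j:ℝ) + 1)) ^ (j + 1)
      = (μ / ((j:ℝ) + 1)) * (μ / ((j:ℝ) + 1)) ^ j := by ring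
    _ ≤ 1 * (μ / ((j:ℝ) + 1)) ^ j := by
        apply mul_le_mul_of_nonneg_right hbase (by positivity)
    _ = (μ / (j:ℝ)) ^ j * ((j:ℝ) / ((j:ℝ) + 1)) ^ j := by rw [one_mul, key]
    _ ≤ (μ / (j:ℝ)) ^ j * (1/2) :=
        mul_le_mul_of_nonneg_left hfrac (by positivity)
    _ = (1/2) * (μ / (j:ℝ)) ^ j := by ring

/-- Iterated halving: for `k ≥ k0 ≥ 1` with `μ ≤ k0`,
`(μ/k)^k ≤ (1/2)^(k-k0) * (μ/k0)^k0`. -/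
lemma halving_iter (μ : ℝ) (hμ : 0 ≤ μ) (k0 : ℕ) (hk0 : 1 ≤ k0) (hμk0 : μ ≤ k0)
    (k : ℕ) (hk : k0 ≤ k) :
    (μ / k) ^ k ≤ (1/2 : ℝ) ^ (k - k0) * (μ / k0) ^ k0 := by
  induction k with
  | zero => omega
  | succ m ih =>
    rcases Nat.lt_or_ge k0 (m+1) with h | h
    · have hm : k0 ≤ m := by omega
      have ihm := ih hm
      have hm1 : 1 ≤ m := le_trans hk0 hm
      have hμm : μ ≤ m := le_trans hμk0 (by exact_mod_cast hm)
      have hstep := halving_step μ hμ m hm1 hμm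
      have : (μ / (m+1 : ℕ)) ^ (m+1) ≤ (1/2) * ((1/2 : ℝ) ^ (m - k0) * (μ / k0) ^ k0) := by
        calc (μ / (m+1 : ℕ)) ^ (m+1) ≤ (1/2) * (μ / m) ^ m := hstep
          _ ≤ (1/2) * ((1/2 : ℝ) ^ (m - k0) * (μ / k0) ^ k0) := by
              apply mul_le_mul_of_nonneg_left ihm (by norm_num)
      calc (μ / (m+1 : ℕ)) ^ (m+1)
          ≤ (1/2) * ((1/2 : ℝ) ^ (m - k0) * (μ / k0) ^ k0) := this
        _ = (1/2 : ℝ) ^ (m + 1 - k0) * (μ / k0) ^ k0 := by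
            rw [show m + 1 - k0 = (m - k0) + 1 by omega, pow_succ]; ring
    · have : k0 = m + 1 := by omega
      subst this
      simp

open Finset in
theorem binomial_poisson_tail (n : ℕ) (p : ℝ) (hp0 : 0 ≤ p) (hp1 : p ≤ 1)
    (t : ℝ) (ht : Real.exp 1 * p * n ≤ t) (ht0 : 0 < t) :
    ∑ k ∈ (Finset.range (n + 1)).filter (fun k : ℕ => (k : ℝ) > t),
      (n.choose k : ℝ) * p ^ k * (1 - p) ^ (n - k)
      ≤ 2 * (Real.exp 1 * p * n / t) ^ t := by
  set μ := Real.exp 1 * p * n with hμdef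
  have hμ0 : 0 ≤ μ := by positivity
  rcases eq_or_lt_of_le hμ0 with hμz | hμpos
  · -- μ = 0 : p = 0 or n = 0
    have hrhs : (2:ℝ) * (μ / t) ^ t = 0 := by
      rw [← hμz, zero_div, Real.zero_rpow (ne_of_gt ht0), mul_zero]
    rw [hrhs]
    apply le_of_eq
    apply Finset.sum_eq_zero
    intro k hk
    simp only [Finset.mem_filter, Finset.mem_range] at hk
    obtain ⟨hkn, hkt⟩ := hk
    have hk1 : 1 ≤ k := by
      by_contra h
      push_neg at h
      interval_cases k
      simp at hkt
      linarith
    have hexp : (0:ℝ) < Real.exp 1 := Real.exp_pos 1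
    have : p = 0 ∨ (n:ℝ) = 0 := by
      rcases mul_eq_zero.mp hμz.symm with h | h
      · rcases mul_eq_zero.mp h with h' | h'
        · exact absurd h' (ne_of_gt hexp)
        · exact Or.inl h'
      · exact Or.inr h
    rcases this with h | h
    · rw [h, zero_pow (by omega)]; ring
    · have : n = 0 := by exact_mod_cast h
      omega
  · -- main case : μ > 0, and μ ≤ t so r := μ/t ∈ (0,1]
    set r := μ / t with hrdef
    have hr0 : 0 < r := div_pos hμpos ht0
    have hr1 : r ≤ 1 := (div_le_one ht0).mpr ht
    set k0 := Nat.floor t + 1 with hk0def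
    have htk0 : t < k0 := by
      have := Nat.lt_floor_add_one t
      rw [hk0def]
      push_cast
      exact this
    have hk01 : 1 ≤ k0 := by omega
    have hμk0 : μ ≤ k0 := le_trans ht htk0.le
    -- bound (μ/k0)^k0 ≤ r^t
    have hbase : (μ / (k0:ℝ)) ^ k0 ≤ r ^ t := by
      have hk0pos : (0:ℝ) < (k0:ℝ) := by exact_mod_cast hk01
      have h1 : (μ / (k0:ℝ)) ^ k0 ≤ r ^ (k0:ℕ) := by
        apply pow_le_pow_left₀ (by positivity)
        exact div_le_div_of_nonneg_left hμ0 ht0 htk0.le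
      have h2 : (r : ℝ) ^ (k0:ℕ) = r ^ ((k0:ℕ):ℝ) := (Real.rpow_natCast r k0).symm
      have h3 : r ^ ((k0:ℕ):ℝ) ≤ r ^ t :=
        Real.rpow_le_rpow_of_exponent_ge hr0 hr1 htk0.le
      calc (μ / (k0:ℝ)) ^ k0 ≤ r ^ (k0:ℕ) := h1
        _ = r ^ ((k0:ℕ):ℝ) := h2
        _ ≤ r ^ t := h3
    -- termwise bound
    have hterm : ∀ k ∈ (Finset.range (n + 1)).filter (fun k : ℕ => (k : ℝ) > t),
        (n.choose k : ℝ) * p ^ k * (1 - p) ^ (n - k)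
          ≤ (1/2 : ℝ) ^ (k - k0) * r ^ t := by
      intro k hk
      simp only [Finset.mem_filter, Finset.mem_range] at hk
      obtain ⟨hkn, hkt⟩ := hk
      have hkk0 : k0 ≤ k := by
        have : Nat.floor t < k := (Nat.floor_lt ht0.le).mpr hkt
        omega
      have hk1 : 1 ≤ k := le_trans hk01 hkk0
      calc (n.choose k : ℝ) * p ^ k * (1 - p) ^ (n - k)
          ≤ (μ / k) ^ k := binom_term_le_pow n k p hp0 hp1 hk1
        _ ≤ (1/2 : ℝ) ^ (k - k0) * (μ / (k0:ℝ)) ^ k0 :=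
            halving_iter μ hμ0 k0 hk01 hμk0 k hkk0
        _ ≤ (1/2 : ℝ) ^ (k - k0) * r ^ t := by
            apply mul_le_mul_of_nonneg_left hbase (by positivity)
    -- sum the geometric bound
    have hsub : (Finset.range (n + 1)).filter (fun k : ℕ => (k : ℝ) > t)
        ⊆ Finset.Ico k0 (n + 1) := by
      intro k hk
      simp only [Finset.mem_filter, Finset.mem_range] at hk
      obtain ⟨hkn, hkt⟩ := hk
      have : Nat.floor t < k := (Nat.floor_lt ht0.le).mpr hkt
      simp only [Finset.mem_Ico]
      omega
    calc ∑ k ∈ (Finset.range (n + 1)).filter (fun k : ℕ => (k : ℝ) > t),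
          (n.choose k : ℝ) * p ^ k * (1 - p) ^ (n - k)
        ≤ ∑ k ∈ (Finset.range (n + 1)).filter (fun k : ℕ => (k : ℝ) > t),
            (1/2 : ℝ) ^ (k - k0) * r ^ t := Finset.sum_le_sum hterm
      _ ≤ ∑ k ∈ Finset.Ico k0 (n + 1), (1/2 : ℝ) ^ (k - k0) * r ^ t := by
          apply Finset.sum_le_sum_of_subset_of_nonneg hsub
          intro k _ _
          positivity
      _ = (∑ k ∈ Finset.Ico k0 (n + 1), (1/2 : ℝ) ^ (k - k0)) * r ^ t := by
          rw [← Finset.sum_mul]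
      _ ≤ 2 * r ^ t := by
          apply mul_le_mul_of_nonneg_right _ (by positivity)
          rw [Finset.sum_Ico_eq_sum_range]
          simp only [Nat.add_sub_cancel_left]
          exact sum_geometric_two_le _
end

section
/- For every K > 0 there exists a constant f₀(K) > 0 such that for all real x, y with |x| ≤ K, |y| ≤ K: Φ(x) + Φ(y) ≥ 1 + f₀(K)·(x + y) whenever x + y ≥ 0, where Φ is the standard normal CDF. -/
open MeasureTheory

noncomputable def stdGaussianCDF (x : ℝ) : ℝ :=
  (∫ t in Set.Iic x, Real.exp (-(t ^ 2) / 2)) / Real.sqrt (2 * Real.pi)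

lemma gauss_integrable : Integrable (fun t : ℝ => Real.exp (-(t ^ 2) / 2)) := by
  have h := integrable_exp_neg_mul_sq (by norm_num : (0:ℝ) < 1/2)
  convert h using 2 with t
  ring_nf

lemma gauss_total : (∫ t : ℝ, Real.exp (-(t ^ 2) / 2)) = Real.sqrt (2 * Real.pi) := by
  have h := integral_gaussian (1/2 : ℝ)
  have : (fun t : ℝ => Real.exp (-(t ^ 2) / 2)) = fun t : ℝ => Real.exp (-(1/2) * t ^ 2) := by
    funext t; ring_nf
  rw [this, h, show Real.pi / (1/2) = 2 * Real.pi by ring]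

lemma gauss_symm (y : ℝ) :
    (∫ t in Set.Iic (-y), Real.exp (-(t ^ 2) / 2)) =
      Real.sqrt (2 * Real.pi) - ∫ t in Set.Iic y, Real.exp (-(t ^ 2) / 2) := by
  have h1 : (∫ t in Set.Iic (-y), Real.exp (-(t ^ 2) / 2)) =
      ∫ t in Set.Ioi y, Real.exp (-(t ^ 2) / 2) := by
    have := integral_comp_neg_Iic (-y)
      (fun t : ℝ => Real.exp (-(t ^ 2) / 2))
    simp only [neg_neg] at this
    rw [← this]
    congr 1
    funext t
    ring_nf
  have h2 := intervalIntegral.integral_Iic_add_Ioi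
    (gauss_integrable.integrableOn) (gauss_integrable.integrableOn) (b := y)
  rw [gauss_total] at h2
  linarith [h1, h2]

theorem gaussian_cdf_pair_lower_bound (K : ℝ) (hK : 0 < K) :
    ∃ f : ℝ, 0 < f ∧ ∀ x y : ℝ, |x| ≤ K → |y| ≤ K → 0 ≤ x + y →
      stdGaussianCDF x + stdGaussianCDF y ≥ 1 + f * (x + y) := by
  have hπ : 0 < Real.sqrt (2 * Real.pi) :=
    Real.sqrt_pos.mpr (by positivity)
  refine ⟨Real.exp (-(K ^ 2) / 2) / Real.sqrt (2 * Real.pi), by positivity, ?_⟩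
  intro x y hx hy hxy
  have hax : -K ≤ x ∧ x ≤ K := abs_le.mp hx
  have hay : -K ≤ y ∧ y ≤ K := abs_le.mp hy
  -- key integral lower bound over Ioc (-y) x
  have hsub : Set.Ioc (-y) x ⊆ Set.Icc (-K) K := by
    intro t ht
    exact ⟨le_trans (neg_le_neg hay.2) ht.1.le, le_trans ht.2 hax.2⟩
  have hlow : ∀ t ∈ Set.Ioc (-y) x, Real.exp (-(K ^ 2) / 2) ≤ Real.exp (-(t ^ 2) / 2) := by
    intro t ht
    have h := hsub ht
    have ht2 : t ^ 2 ≤ K ^ 2 := sq_le_sq' h.1 h.2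
    exact Real.exp_le_exp.mpr (by linarith)
  have hconst : (∫ _ in Set.Ioc (-y) x, Real.exp (-(K ^ 2) / 2)) =
      Real.exp (-(K ^ 2) / 2) * (x + y) := by
    rw [setIntegral_const]
    rw [Real.volume_real_Ioc_of_le (by linarith), smul_eq_mul]
    ring
  have hmono : Real.exp (-(K ^ 2) / 2) * (x + y) ≤
      ∫ t in Set.Ioc (-y) x, Real.exp (-(t ^ 2) / 2) := by
    rw [← hconst]
    apply setIntegral_mono_on
    · exact integrableOn_const (by rw [Real.volume_Ioc]; exact ENNReal.ofReal_ne_top)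
    · exact gauss_integrable.integrableOn
    · exact measurableSet_Ioc
    · exact hlow
  -- relate to CDFs
  have hdiff : (∫ t in Set.Iic x, Real.exp (-(t ^ 2) / 2)) -
      (∫ t in Set.Iic (-y), Real.exp (-(t ^ 2) / 2)) =
      ∫ t in Set.Ioc (-y) x, Real.exp (-(t ^ 2) / 2) := by
    rw [intervalIntegral.integral_Iic_sub_Iic gauss_integrable.integrableOn
      gauss_integrable.integrableOn,
      intervalIntegral.integral_of_le (by linarith)]
  rw [gauss_symm y] at hdiff
  unfold stdGaussianCDF
  rw [← add_div, ge_iff_le, le_div_iff₀ hπ]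
  have hexpand : (1 + Real.exp (-(K ^ 2) / 2) / Real.sqrt (2 * Real.pi) * (x + y)) *
      Real.sqrt (2 * Real.pi) =
      Real.sqrt (2 * Real.pi) + Real.exp (-(K ^ 2) / 2) * (x + y) := by
    field_simp
  rw [hexpand]
  linarith
end

section
/- Let Z⁺ and Z⁻ be independent copies of Bin(m, p) with m ≥ 1 and 0 < p ≤ 1/2. Then P(Z⁺ = Z⁻) ≤ 4/√(mp). -/
open Finset Real

noncomputable def binP (m : ℕ) (p : ℝ) (k : ℕ) : ℝ :=
  (m.choose k : ℝ) * p ^ k * (1 - p) ^ (m - k)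

lemma stirling_ge (n : ℕ) (hn : 1 ≤ n) : (1.7 : ℝ) ≤ Stirling.stirlingSeq n := by
  have hlim : Filter.Tendsto (Stirling.stirlingSeq ∘ Nat.succ) Filter.atTop
      (nhds (Real.sqrt π)) :=
    Stirling.tendsto_stirlingSeq_sqrt_pi.comp (Filter.tendsto_add_atTop_nat 1)
  have h1 : Real.sqrt π ≤ Stirling.stirlingSeq n := by
    obtain ⟨j, rfl⟩ : ∃ j, n = j + 1 := ⟨n - 1, by omega⟩
    exact Stirling.stirlingSeq'_antitone.le_of_tendsto hlim j
  refine le_trans ?_ h1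
  rw [show (1.7 : ℝ) = Real.sqrt (1.7 ^ 2) by rw [Real.sqrt_sq]; norm_num]
  apply Real.sqrt_le_sqrt
  nlinarith [Real.pi_gt_three]

lemma stirling_le (n : ℕ) (hn : 1 ≤ n) : Stirling.stirlingSeq n ≤ 2 := by
  obtain ⟨j, rfl⟩ : ∃ j, n = j + 1 := ⟨n - 1, by omega⟩
  have h1 : Stirling.stirlingSeq (j + 1) ≤ Stirling.stirlingSeq 1 :=
    Stirling.stirlingSeq'_antitone (Nat.zero_le j)
  rw [Stirling.stirlingSeq_one] at h1
  refine h1.trans ?_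
  rw [div_le_iff₀ (by positivity)]
  have h2 : (1.4 : ℝ) ≤ Real.sqrt 2 := by
    rw [show (1.4 : ℝ) = Real.sqrt (1.4 ^ 2) by rw [Real.sqrt_sq]; norm_num]
    apply Real.sqrt_le_sqrt; norm_num
  nlinarith [Real.exp_one_lt_d9]

lemma factorial_lower (n : ℕ) (hn : 1 ≤ n) :
    (1.7 : ℝ) * Real.sqrt (2 * n) * ((n : ℝ) / Real.exp 1) ^ n ≤ (n.factorial : ℝ) := by
  have hd : 0 < Real.sqrt (2 * n) * ((n : ℝ) / Real.exp 1) ^ n := by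
    have : (0:ℝ) < n := by exact_mod_cast hn
    positivity
  have h := stirling_ge n hn
  rw [Stirling.stirlingSeq, le_div_iff₀ hd] at h
  linarith [h]

lemma factorial_upper (n : ℕ) (hn : 1 ≤ n) :
    (n.factorial : ℝ) ≤ 2 * Real.sqrt (2 * n) * ((n : ℝ) / Real.exp 1) ^ n := by
  have hd : 0 < Real.sqrt (2 * n) * ((n : ℝ) / Real.exp 1) ^ n := by
    have : (0:ℝ) < n := by exact_mod_cast hn
    positivity
  have h := stirling_le n hn
  rw [Stirling.stirlingSeq, div_le_iff₀ hd] at h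
  linarith [h]

lemma choose_bound (k n : ℕ) (hk : 1 ≤ k) (hn : 1 ≤ n) :
    ((k+n).choose k : ℝ) * ((k : ℝ)/((k:ℝ)+n))^k * ((n : ℝ)/((k:ℝ)+n))^n
      ≤ Real.sqrt (((k:ℝ)+(n:ℝ)) / (2 * k * n)) := by
  have hkR : (0:ℝ) < k := by exact_mod_cast hk
  have hnR : (0:ℝ) < n := by exact_mod_cast hn
  have hmR : (0:ℝ) < (k:ℝ)+n := by linarith
  have he : (0:ℝ) < Real.exp 1 := Real.exp_pos 1
  set e := Real.exp 1 with he_def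
  set Sk := Real.sqrt (2*(k:ℝ)) * ((k:ℝ)/e)^k with hSk_def
  set Sn := Real.sqrt (2*(n:ℝ)) * ((n:ℝ)/e)^n with hSn_def
  set Sm := Real.sqrt (2*((k:ℝ)+n)) * (((k:ℝ)+n)/e)^(k+n) with hSm_def
  have hSkpos : 0 < Sk := by positivity
  have hSnpos : 0 < Sn := by positivity
  have hfac : ((k+n).choose k : ℝ) * (k.factorial : ℝ) * (n.factorial : ℝ)
      = ((k+n).factorial : ℝ) := by
    exact_mod_cast congrArg (Nat.cast (R := ℝ))
      (by simpa using Nat.choose_mul_factorial_mul_factorial (Nat.le_add_right k n))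
  have hlo1 : (1.7:ℝ) * Sk ≤ k.factorial := by
    have := factorial_lower k hk; rw [hSk_def]; linarith [this]
  have hlo2 : (1.7:ℝ) * Sn ≤ n.factorial := by
    have := factorial_lower n hn; rw [hSn_def]; linarith [this]
  have hup : ((k+n).factorial : ℝ) ≤ 2 * Sm := by
    have := factorial_upper (k+n) (by omega)
    rw [hSm_def]; push_cast at this ⊢; linarith [this]
  have hpow : (((k:ℝ)+n)/e)^(k+n) * (((k:ℝ)/((k:ℝ)+n))^k * ((n:ℝ)/((k:ℝ)+n))^n)
      = ((k:ℝ)/e)^k * ((n:ℝ)/e)^n := by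
    rw [div_pow, div_pow, div_pow, div_pow, div_pow, pow_add, pow_add]
    field_simp
  have hsq : Real.sqrt (((k:ℝ)+n)/(2*k*n)) * (Real.sqrt (2*(k:ℝ)) * Real.sqrt (2*(n:ℝ)))
      = Real.sqrt (2*((k:ℝ)+n)) := by
    rw [← Real.sqrt_mul (by positivity), ← Real.sqrt_mul (by positivity)]
    congr 1
    field_simp
  have hC : (0:ℝ) ≤ ((k+n).choose k : ℝ) := by positivity
  apply le_of_mul_le_mul_right _ (show (0:ℝ) < (1.7*Sk) * (1.7*Sn) by positivity)
  calc ((k+n).choose k : ℝ) * ((k : ℝ)/((k:ℝ)+n))^k * ((n : ℝ)/((k:ℝ)+n))^n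
        * ((1.7*Sk) * (1.7*Sn))
      = (((k+n).choose k : ℝ) * (1.7*Sk) * (1.7*Sn))
        * (((k : ℝ)/((k:ℝ)+n))^k * ((n : ℝ)/((k:ℝ)+n))^n) := by ring
    _ ≤ (((k+n).choose k : ℝ) * (k.factorial : ℝ) * (n.factorial : ℝ))
        * (((k : ℝ)/((k:ℝ)+n))^k * ((n : ℝ)/((k:ℝ)+n))^n) := by
        apply mul_le_mul_of_nonneg_right _ (by positivity)
        apply mul_le_mul _ hlo2 (by positivity) (by positivity)
        exact mul_le_mul_of_nonneg_left hlo1 hC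
    _ = ((k+n).factorial : ℝ) * (((k : ℝ)/((k:ℝ)+n))^k * ((n : ℝ)/((k:ℝ)+n))^n) := by
        rw [hfac]
    _ ≤ 2 * Sm * (((k : ℝ)/((k:ℝ)+n))^k * ((n : ℝ)/((k:ℝ)+n))^n) := by
        apply mul_le_mul_of_nonneg_right hup (by positivity)
    _ = 2 * Real.sqrt (2*((k:ℝ)+n)) * (((k:ℝ)/e)^k * ((n:ℝ)/e)^n) := by
        rw [hSm_def]; rw [mul_assoc (2:ℝ), mul_assoc (2:ℝ)]
        congr 1
        rw [mul_assoc, hpow]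
    _ ≤ 2.89 * Real.sqrt (2*((k:ℝ)+n)) * (((k:ℝ)/e)^k * ((n:ℝ)/e)^n) := by
        have h1 : (0:ℝ) ≤ Real.sqrt (2*((k:ℝ)+n)) := Real.sqrt_nonneg _
        have h2 : (0:ℝ) ≤ ((k:ℝ)/e)^k * ((n:ℝ)/e)^n := by positivity
        nlinarith
    _ = Real.sqrt (((k:ℝ)+(n:ℝ)) / (2 * k * n)) * ((1.7*Sk) * (1.7*Sn)) := by
        rw [hSk_def, hSn_def]
        rw [show (1.7*(Real.sqrt (2*(k:ℝ)) * ((k:ℝ)/e)^k)) * (1.7*(Real.sqrt (2*(n:ℝ)) * ((n:ℝ)/e)^n))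
          = 2.89 * (Real.sqrt (2*(k:ℝ)) * Real.sqrt (2*(n:ℝ))) * (((k:ℝ)/e)^k * ((n:ℝ)/e)^n) by ring]
        rw [← hsq]; ring

lemma pq_le (k n : ℕ) (hk : 1 ≤ k) (hn : 1 ≤ n) (p : ℝ) (hp0 : 0 < p) (hp1 : p < 1) :
    p^k * (1-p)^n ≤ ((k:ℝ)/((k:ℝ)+n))^k * ((n:ℝ)/((k:ℝ)+n))^n := by
  have hq0 : (0:ℝ) < 1 - p := by linarith
  have hkR : (0:ℝ) < k := by exact_mod_cast hk
  have hnR : (0:ℝ) < n := by exact_mod_cast hn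
  have hmR : (0:ℝ) < (k:ℝ)+n := by linarith
  set a : ℝ := ((k:ℝ)+n)*p/k with ha_def
  set b : ℝ := ((k:ℝ)+n)*(1-p)/n with hb_def
  have ha0 : 0 ≤ a := by positivity
  have hb0 : 0 ≤ b := by positivity
  have hgeom : a ^ ((k:ℝ)/((k:ℝ)+n)) * b ^ ((n:ℝ)/((k:ℝ)+n))
      ≤ ((k:ℝ)/((k:ℝ)+n)) * a + ((n:ℝ)/((k:ℝ)+n)) * b :=
    Real.geom_mean_le_arith_mean2_weighted (by positivity) (by positivity) ha0 hb0
      (by field_simp)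
  have hsum : ((k:ℝ)/((k:ℝ)+n)) * a + ((n:ℝ)/((k:ℝ)+n)) * b = 1 := by
    rw [ha_def, hb_def]; field_simp; ring
  rw [hsum] at hgeom
  have hgnn : 0 ≤ a ^ ((k:ℝ)/((k:ℝ)+n)) * b ^ ((n:ℝ)/((k:ℝ)+n)) := by positivity
  have hpow : a ^ k * b ^ n ≤ 1 := by
    have h2 : (a ^ ((k:ℝ)/((k:ℝ)+n)) * b ^ ((n:ℝ)/((k:ℝ)+n))) ^ (k+n) ≤ 1 := by
      calc (a ^ ((k:ℝ)/((k:ℝ)+n)) * b ^ ((n:ℝ)/((k:ℝ)+n))) ^ (k+n)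
          ≤ 1 ^ (k+n) := pow_le_pow_left₀ hgnn hgeom _
        _ = 1 := one_pow _
    rw [mul_pow, ← Real.rpow_natCast (a ^ ((k:ℝ)/((k:ℝ)+n))) (k+n),
      ← Real.rpow_natCast (b ^ ((n:ℝ)/((k:ℝ)+n))) (k+n),
      ← Real.rpow_mul ha0, ← Real.rpow_mul hb0] at h2
    have e1 : (k:ℝ)/((k:ℝ)+n) * ((k+n:ℕ):ℝ) = (k:ℕ) := by push_cast; field_simp
    have e2 : (n:ℝ)/((k:ℝ)+n) * ((k+n:ℕ):ℝ) = (n:ℕ) := by push_cast; field_simp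
    rwa [e1, e2, Real.rpow_natCast, Real.rpow_natCast] at h2
  have hpa : p = a * ((k:ℝ)/((k:ℝ)+n)) := by rw [ha_def]; field_simp
  have hpb : 1 - p = b * ((n:ℝ)/((k:ℝ)+n)) := by rw [hb_def]; field_simp
  calc p^k * (1-p)^n = (a^k * b^n) * (((k:ℝ)/((k:ℝ)+n))^k * ((n:ℝ)/((k:ℝ)+n))^n) := by
        rw [hpb, hpa, mul_pow, mul_pow]; ring
    _ ≤ 1 * (((k:ℝ)/((k:ℝ)+n))^k * ((n:ℝ)/((k:ℝ)+n))^n) := by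
        apply mul_le_mul_of_nonneg_right hpow (by positivity)
    _ = ((k:ℝ)/((k:ℝ)+n))^k * ((n:ℝ)/((k:ℝ)+n))^n := one_mul _

lemma step_up (m k : ℕ) (p : ℝ) (hp0 : 0 < p) (hp1 : p < 1) (hkm : k < m)
    (h : (k:ℝ)+1 ≤ ((m:ℝ)+1)*p) :
    binP m p k ≤ binP m p (k+1) := by
  unfold binP
  have hq0 : (0:ℝ) < 1 - p := by linarith
  have hc : (m.choose (k+1) : ℝ) * ((k:ℝ)+1) = (m.choose k : ℝ) * ((m:ℝ) - k) := by
    have := Nat.choose_succ_right_eq m k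
    have hcast : ((m - k : ℕ):ℝ) = (m:ℝ) - k := by rw [Nat.cast_sub hkm.le]
    rw [← hcast]
    exact_mod_cast congrArg (Nat.cast (R := ℝ)) this
  have hCk : (0:ℝ) ≤ (m.choose k : ℝ) := by positivity
  have key : (m.choose k : ℝ) * (1-p) ≤ (m.choose (k+1) : ℝ) * p := by
    nlinarith [mul_nonneg hCk (sub_nonneg.2 h)]
  have hexp : m - k = (m - (k+1)) + 1 := by omega
  have h1 : (0:ℝ) ≤ p^k * (1-p)^(m-(k+1)) := by positivity
  calc (m.choose k : ℝ) * p^k * (1-p)^(m-k)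
      = ((m.choose k : ℝ) * (1-p)) * (p^k * (1-p)^(m-(k+1))) := by
        rw [hexp, pow_succ]; ring
    _ ≤ ((m.choose (k+1) : ℝ) * p) * (p^k * (1-p)^(m-(k+1))) :=
        mul_le_mul_of_nonneg_right key h1
    _ = (m.choose (k+1) : ℝ) * p^(k+1) * (1-p)^(m-(k+1)) := by
        rw [pow_succ]; ring

lemma step_down (m k : ℕ) (p : ℝ) (hp0 : 0 < p) (hp1 : p < 1) (hkm : k < m)
    (h : ((m:ℝ)+1)*p ≤ (k:ℝ)+1) :
    binP m p (k+1) ≤ binP m p k := by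
  unfold binP
  have hq0 : (0:ℝ) < 1 - p := by linarith
  have hc : (m.choose (k+1) : ℝ) * ((k:ℝ)+1) = (m.choose k : ℝ) * ((m:ℝ) - k) := by
    have := Nat.choose_succ_right_eq m k
    have hcast : ((m - k : ℕ):ℝ) = (m:ℝ) - k := by rw [Nat.cast_sub hkm.le]
    rw [← hcast]
    exact_mod_cast congrArg (Nat.cast (R := ℝ)) this
  have hCk : (0:ℝ) ≤ (m.choose k : ℝ) := by positivity
  have hCk1 : (0:ℝ) ≤ (m.choose (k+1) : ℝ) := by positivity
  have key : (m.choose (k+1) : ℝ) * p ≤ (m.choose k : ℝ) * (1-p) := by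
    nlinarith [mul_nonneg hCk1 (sub_nonneg.2 h)]
  have hexp : m - k = (m - (k+1)) + 1 := by omega
  have h1 : (0:ℝ) ≤ p^k * (1-p)^(m-(k+1)) := by positivity
  calc (m.choose (k+1) : ℝ) * p^(k+1) * (1-p)^(m-(k+1))
      = ((m.choose (k+1) : ℝ) * p) * (p^k * (1-p)^(m-(k+1))) := by
        rw [pow_succ]; ring
    _ ≤ ((m.choose k : ℝ) * (1-p)) * (p^k * (1-p)^(m-(k+1))) :=
        mul_le_mul_of_nonneg_right key h1
    _ = (m.choose k : ℝ) * p^k * (1-p)^(m-k) := by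
        rw [hexp, pow_succ]; ring

lemma mode_le (m : ℕ) (p : ℝ) (hp0 : 0 < p) (hp1 : p < 1) (k : ℕ) :
    binP m p k ≤ binP m p ⌊((m:ℝ)+1)*p⌋₊ := by
  set k₀ := ⌊((m:ℝ)+1)*p⌋₊ with hk₀def
  have hk₀le : (k₀:ℝ) ≤ ((m:ℝ)+1)*p := Nat.floor_le (by positivity)
  have hk₀gt : ((m:ℝ)+1)*p < (k₀:ℝ) + 1 := Nat.lt_floor_add_one _
  have hk₀m : k₀ ≤ m := by
    have h1 : ((m:ℝ)+1)*p < (m:ℝ)+1 := by nlinarith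
    have h2 : (k₀:ℝ) < (m:ℝ)+1 := lt_of_le_of_lt hk₀le h1
    have : (k₀:ℕ) < m + 1 := by exact_mod_cast h2
    omega
  have up : ∀ j k, k + j ≤ k₀ → binP m p k ≤ binP m p (k + j) := by
    intro j
    induction j with
    | zero => intro k _; exact le_refl _
    | succ j ih =>
      intro k hkj
      have hk1 : k + 1 ≤ k₀ := by omega
      have hstep : binP m p k ≤ binP m p (k+1) := by
        apply step_up m k p hp0 hp1 (by omega)
        have : ((k:ℝ)+1) ≤ (k₀:ℝ) := by exact_mod_cast hk1
        linarith
      have := ih (k+1) (by omega)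
      have heq : k + 1 + j = k + (j + 1) := by omega
      rw [heq] at this
      exact hstep.trans this
  have down : ∀ j, k₀ + j ≤ m → binP m p (k₀ + j) ≤ binP m p k₀ := by
    intro j
    induction j with
    | zero => intro _; exact le_refl _
    | succ j ih =>
      intro hkj
      have hstep : binP m p (k₀ + j + 1) ≤ binP m p (k₀ + j) := by
        apply step_down m (k₀ + j) p hp0 hp1 (by omega)
        push_cast
        linarith [Nat.cast_nonneg (α := ℝ) j]
      have heq : k₀ + (j + 1) = k₀ + j + 1 := by omega
      rw [heq]
      exact hstep.trans (ih (by omega))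
  rcases le_or_gt k k₀ with hle | hlt
  · have := up (k₀ - k) k (by omega)
    rwa [show k + (k₀ - k) = k₀ by omega] at this
  · rcases le_or_gt k m with hkm | hmk
    · have := down (k - k₀) (by omega)
      rwa [show k₀ + (k - k₀) = k by omega] at this
    · have hck : m.choose k = 0 := Nat.choose_eq_zero_of_lt hmk
      have h0 : binP m p k = 0 := by unfold binP; rw [hck]; push_cast; ring
      rw [h0]
      unfold binP
      have h1p : (0:ℝ) ≤ 1 - p := by linarith
      exact mul_nonneg (mul_nonneg (by positivity) (by positivity)) (pow_nonneg h1p _)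

lemma sum_binP (m : ℕ) (p : ℝ) :
    ∑ k ∈ Finset.range (m+1), binP m p k = 1 := by
  have h := add_pow p (1-p) m
  rw [show p + (1-p) = 1 by ring, one_pow] at h
  rw [show (1:ℝ) = ∑ k ∈ Finset.range (m+1), p ^ k * (1-p) ^ (m - k) * (m.choose k : ℝ) from h]
  apply Finset.sum_congr rfl
  intro k _
  unfold binP
  ring

open Finset in
theorem binomial_collision_prob_le (m : ℕ) (hm : 1 ≤ m) (p : ℝ) (hp0 : 0 < p)
    (hp1 : p ≤ 1 / 2) :
    ∑ k ∈ Finset.range (m + 1),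
      ((m.choose k : ℝ) * p ^ k * (1 - p) ^ (m - k)) ^ 2
      ≤ 4 / Real.sqrt (m * p) := by
  have hp1' : p < 1 := by linarith
  have hq0 : (0:ℝ) < 1 - p := by linarith
  have hmR : (0:ℝ) < m := by exact_mod_cast hm
  have hmp0 : (0:ℝ) < (m:ℝ) * p := by positivity
  have hsqpos : 0 < Real.sqrt ((m:ℝ) * p) := Real.sqrt_pos.2 hmp0
  have hb_nonneg : ∀ k, 0 ≤ binP m p k := by
    intro k; unfold binP; positivity
  have hsum := sum_binP m p
  show ∑ k ∈ Finset.range (m + 1), (binP m p k) ^ 2 ≤ 4 / Real.sqrt ((m:ℝ) * p)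
  by_cases hc : (m:ℝ) * p ≤ 16
  · -- trivial case
    have hble : ∀ k ∈ Finset.range (m+1), binP m p k ≤ 1 := by
      intro k hk
      rw [← hsum]
      exact Finset.single_le_sum (fun i _ => hb_nonneg i) hk
    have h4 : Real.sqrt ((m:ℝ)*p) ≤ 4 := by
      have := Real.sqrt_le_sqrt hc
      rwa [show Real.sqrt 16 = 4 by
        rw [show (16:ℝ) = 4^2 by norm_num, Real.sqrt_sq]; norm_num] at this
    calc ∑ k ∈ Finset.range (m+1), (binP m p k)^2
        ≤ ∑ k ∈ Finset.range (m+1), binP m p k := by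
          apply Finset.sum_le_sum
          intro k hk
          nlinarith [hb_nonneg k, hble k hk]
      _ = 1 := hsum
      _ ≤ 4 / Real.sqrt ((m:ℝ)*p) := by
          rw [le_div_iff₀ hsqpos]; linarith
  · push_neg at hc
    have hm32 : (32:ℝ) < m := by nlinarith
    set k₀ := ⌊((m:ℝ)+1)*p⌋₊ with hk₀def
    have hk₀le : (k₀:ℝ) ≤ ((m:ℝ)+1)*p := Nat.floor_le (by positivity)
    have hk₀gt : ((m:ℝ)+1)*p < (k₀:ℝ) + 1 := Nat.lt_floor_add_one _
    have hk₀m : k₀ ≤ m := by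
      have h1 : ((m:ℝ)+1)*p < (m:ℝ)+1 := by nlinarith
      have h2 : (k₀:ℝ) < (m:ℝ)+1 := lt_of_le_of_lt hk₀le h1
      have : (k₀:ℕ) < m + 1 := by exact_mod_cast h2
      omega
    have hk₀15 : (15:ℝ) < (k₀:ℝ) := by nlinarith
    have hk₀1 : 1 ≤ k₀ := by
      by_contra h
      push_neg at h
      interval_cases k₀ <;> norm_num at hk₀15
    set n := m - k₀ with hn_def
    have hkn : k₀ + n = m := by omega
    have hncast : (n:ℝ) = (m:ℝ) - k₀ := by
      rw [hn_def, Nat.cast_sub hk₀m]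
    have hn15 : (15:ℝ) < (n:ℝ) := by
      rw [hncast]; nlinarith
    have hn1 : 1 ≤ n := by
      by_contra h
      push_neg at h
      interval_cases n <;> norm_num at hn15
    have hmcast : (k₀:ℝ) + (n:ℝ) = (m:ℝ) := by rw [hncast]; ring
    have hmode : binP m p k₀ ≤ Real.sqrt ((m:ℝ)/(2*k₀*n)) := by
      have hcb := choose_bound k₀ n hk₀1 hn1
      have hpq := pq_le k₀ n hk₀1 hn1 p hp0 hp1'
      rw [hmcast] at hcb hpq
      rw [hkn] at hcb
      have hCnn : (0:ℝ) ≤ (m.choose k₀ : ℝ) := by positivity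
      calc binP m p k₀ = (m.choose k₀ : ℝ) * (p^k₀ * (1-p)^n) := by
            unfold binP; rw [hn_def]; ring
        _ ≤ (m.choose k₀ : ℝ) * (((k₀:ℝ)/(m:ℝ))^k₀ * ((n:ℝ)/(m:ℝ))^n) :=
            mul_le_mul_of_nonneg_left hpq hCnn
        _ = (m.choose k₀ : ℝ) * ((k₀:ℝ)/(m:ℝ))^k₀ * ((n:ℝ)/(m:ℝ))^n := by ring
        _ ≤ Real.sqrt ((m:ℝ)/(2*k₀*n)) := hcb
    have hnum : (m:ℝ)/(2*k₀*n) ≤ 16/((m:ℝ)*p) := by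
      have hk₀pos : (0:ℝ) < k₀ := by linarith
      have hnpos : (0:ℝ) < n := by linarith
      rw [div_le_div_iff₀ (by positivity) hmp0]
      have hA : (15/16:ℝ)*((m:ℝ)*p) ≤ (k₀:ℝ) := by nlinarith
      have hB : (15/32:ℝ)*(m:ℝ) ≤ (n:ℝ) := by
        rw [hncast]; nlinarith
      nlinarith [mul_le_mul hA hB (by positivity) (by linarith)]
    have hfinal : binP m p k₀ ≤ 4 / Real.sqrt ((m:ℝ)*p) := by
      refine hmode.trans ?_
      calc Real.sqrt ((m:ℝ)/(2*k₀*n)) ≤ Real.sqrt (16/((m:ℝ)*p)) :=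
            Real.sqrt_le_sqrt hnum
        _ = 4 / Real.sqrt ((m:ℝ)*p) := by
            rw [Real.sqrt_div (by norm_num : (0:ℝ) ≤ 16) ((m:ℝ)*p),
              show Real.sqrt 16 = 4 by
                rw [show (16:ℝ) = 4^2 by norm_num, Real.sqrt_sq]; norm_num]
    calc ∑ k ∈ Finset.range (m+1), (binP m p k)^2
        ≤ ∑ k ∈ Finset.range (m+1), binP m p k * binP m p k₀ := by
          apply Finset.sum_le_sum
          intro k hk
          rw [pow_two]
          exact mul_le_mul_of_nonneg_left (mode_le m p hp0 hp1' k) (hb_nonneg k)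
      _ = (∑ k ∈ Finset.range (m+1), binP m p k) * binP m p k₀ := by
          rw [← Finset.sum_mul]
      _ = binP m p k₀ := by rw [hsum, one_mul]
      _ ≤ 4 / Real.sqrt ((m:ℝ)*p) := hfinal
end
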